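/- Let f : I → ℝ be convex and strictly increasing on an open interval I, with everywhere positive one-sided derivatives f′₊ and f′₋. Suppose a : I² → ℝ satisfies f((x+v)/2) − f((u+v)/2) ≤ a(u,v)(f(x)−f(u)) for all x, u, v ∈ I with x ≠ u. Then f′₊((u+v)/2)/(2 f′₊(u)) ≤ a(u,v) ≤ f′₋((u+v)/2)/(2 f′₋(u)) for all u, v ∈ I. -/

import Mathlib

open Filter Set Topology

theorem stmt_10 (I : Set ℝ) (hIop : IsOpen I) (hIcv : Convex ℝ I)
    (f : ℝ → ℝ) (hfcv : ConvexOn ℝ I f) (hfm : StrictMonoOn f I)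
    (fp fm : ℝ → ℝ)
    (hfp : ∀ u ∈ I, HasDerivWithinAt f (fp u) (Set.Ioi u) u)
    (hfm' : ∀ u ∈ I, HasDerivWithinAt f (fm u) (Set.Iio u) u)
    (hfppos : ∀ u ∈ I, 0 < fp u) (hfmpos : ∀ u ∈ I, 0 < fm u)
    (a : ℝ → ℝ → ℝ)
    (ha : ∀ x ∈ I, ∀ u ∈ I, ∀ v ∈ I, x ≠ u →
      f ((x + v) / 2) - f ((u + v) / 2) ≤ a u v * (f x - f u)) :
    ∀ u ∈ I, ∀ v ∈ I,
      fp ((u + v) / 2) / (2 * fp u) ≤ a u v ∧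
      a u v ≤ fm ((u + v) / 2) / (2 * fm u) := by
  intro u hu v hv
  set m := (u + v) / 2 with hm_def
  have hm : m ∈ I := by
    have h1 := hIcv hu hv (by norm_num : (0:ℝ) ≤ 1/2) (by norm_num : (0:ℝ) ≤ 1/2)
      (by norm_num)
    have h2 : (u + v) / 2 = (1/2 : ℝ) • u + (1/2 : ℝ) • v := by
      simp [smul_eq_mul]; ring
    rw [hm_def, h2]; exact h1
  -- derivative of inner map
  have hinner : ∀ x : ℝ, HasDerivAt (fun x => (x + v) / 2) (1/2) x := by
    intro x
    simpa using ((hasDerivAt_id x).add_const v).div_const 2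
  -- g = f ∘ inner
  set g : ℝ → ℝ := fun x => f ((x + v) / 2) with hg_def
  -- right derivative of g at u
  have hgp : HasDerivWithinAt g (fp m * (1/2)) (Set.Ioi u) u := by
    have : Set.MapsTo (fun x => (x + v) / 2) (Set.Ioi u) (Set.Ioi m) := by
      intro x hx
      simp only [Set.mem_Ioi] at hx ⊢
      rw [hm_def]; linarith
    simpa [hg_def, hm_def, Function.comp_def] using (hfp m hm).comp u ((hinner u).hasDerivWithinAt) this
  have hgm : HasDerivWithinAt g (fm m * (1/2)) (Set.Iio u) u := by
    have : Set.MapsTo (fun x => (x + v) / 2) (Set.Iio u) (Set.Iio m) := by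
      intro x hx
      simp only [Set.mem_Iio] at hx ⊢
      rw [hm_def]; linarith
    simpa [hg_def, hm_def, Function.comp_def] using (hfm' m hm).comp u ((hinner u).hasDerivWithinAt) this
  have hIuev : ∀ᶠ x in 𝓝 u, x ∈ I := hIop.eventually_mem hu
  constructor
  · -- right side: fp m * (1/2) ≤ a u v * fp u
    have hslopeg : Tendsto (slope g u) (𝓝[>] u) (𝓝 (fp m * (1/2))) := by
      have := hasDerivWithinAt_iff_tendsto_slope.mp hgp
      have hd : Set.Ioi u \ {u} = Set.Ioi u :=
        Set.diff_singleton_eq_self (by simp)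
      rw [hd] at this; exact this
    have hslopef : Tendsto (slope f u) (𝓝[>] u) (𝓝 (fp u)) := by
      have := hasDerivWithinAt_iff_tendsto_slope.mp (hfp u hu)
      simpa using this
    have hev : ∀ᶠ x in 𝓝[>] u, slope g u x ≤ a u v * slope f u x := by
      filter_upwards [eventually_nhdsWithin_of_eventually_nhds hIuev,
        self_mem_nhdsWithin] with x hxI (hx : x ∈ Set.Ioi u)
      have hxu : u < x := hx
      have key := ha x hxI u hu v hv (ne_of_gt hxu)
      rw [slope_def_field, slope_def_field, hg_def]
      have hne : x - u ≠ 0 := by linarith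
      rw [div_le_iff₀ (by linarith : (0:ℝ) < x - u)]
      have : a u v * ((f x - f u) / (x - u)) * (x - u) = a u v * (f x - f u) := by
        field_simp
      rw [this]
      exact key
    have hlim : fp m * (1/2) ≤ a u v * fp u :=
      le_of_tendsto_of_tendsto hslopeg (tendsto_const_nhds.mul hslopef) hev
    have hpos := hfppos u hu
    rw [div_le_iff₀ (by linarith : (0:ℝ) < 2 * fp u)]
    nlinarith
  · -- left side: a u v * fm u ≤ fm m * (1/2)
    have hslopeg : Tendsto (slope g u) (𝓝[<] u) (𝓝 (fm m * (1/2))) := by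
      have := hasDerivWithinAt_iff_tendsto_slope.mp hgm
      have hd : Set.Iio u \ {u} = Set.Iio u :=
        Set.diff_singleton_eq_self (by simp)
      rw [hd] at this; exact this
    have hslopef : Tendsto (slope f u) (𝓝[<] u) (𝓝 (fm u)) := by
      have := hasDerivWithinAt_iff_tendsto_slope.mp (hfm' u hu)
      simpa using this
    have hev : ∀ᶠ x in 𝓝[<] u, a u v * slope f u x ≤ slope g u x := by
      filter_upwards [eventually_nhdsWithin_of_eventually_nhds hIuev,
        self_mem_nhdsWithin] with x hxI (hx : x ∈ Set.Iio u)
      have hxu : x < u := hx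
      have key := ha x hxI u hu v hv (ne_of_lt hxu)
      rw [slope_def_field, slope_def_field, hg_def]
      have hne : x - u ≠ 0 := by linarith
      rw [le_div_iff_of_neg (by linarith : x - u < 0)]
      have : a u v * ((f x - f u) / (x - u)) * (x - u) = a u v * (f x - f u) := by
        field_simp
      rw [this]
      exact key
    have hlim : a u v * fm u ≤ fm m * (1/2) :=
      le_of_tendsto_of_tendsto (tendsto_const_nhds.mul hslopef) hslopeg hev
    have hpos := hfmpos u hu
    rw [le_div_iff₀ (by linarith : (0:ℝ) < 2 * fm u)]
    nlinarith
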